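/- The entropy estimator Ĥ_z can be written as Ĥ_z = ∑_k p̂_k ∑_{v=1}^{n−f_k} (1/v) ∏_{j=0}^{v−1} (n − f_k − j)/(n − 1 − j), where f_k = n p̂_k, and each inner product term lies in [0,1]; consequently Ĥ_z ≥ 0. -/

import Mathlib

open Finset

lemma desc_prod (m : ℕ) : ∀ v, v ≤ m →
    ((Nat.factorial (m - v) : ℝ)) * ∏ j ∈ Finset.range v, ((m : ℝ) - j)
      = (Nat.factorial m : ℝ) := by
  intro v
  induction v with
  | zero => simp
  | succ v ih =>
    intro h
    have hv : v < m := h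
    rw [Finset.prod_range_succ]
    have h1 : m - v = (m - (v + 1)) + 1 := by omega
    have h3 : ((m - (v + 1) + 1 : ℕ) : ℝ) = (m : ℝ) - v := by
      have h4 : m - (v + 1) + 1 = m - v := by omega
      rw [h4, Nat.cast_sub hv.le]
    have hfac : ((Nat.factorial (m - v) : ℝ)) = ((m : ℝ) - v) * (Nat.factorial (m - (v + 1)) : ℝ) := by
      rw [h1, Nat.factorial_succ]
      push_cast [Nat.cast_sub (by omega : v + 1 ≤ m)]
      ring
    calc (Nat.factorial (m - (v + 1)) : ℝ) * ((∏ j ∈ Finset.range v, ((m : ℝ) - j)) * ((m : ℝ) - v))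
        = (((m : ℝ) - v) * (Nat.factorial (m - (v + 1)) : ℝ)) * ∏ j ∈ Finset.range v, ((m : ℝ) - j) := by ring
      _ = (Nat.factorial (m - v) : ℝ) * ∏ j ∈ Finset.range v, ((m : ℝ) - j) := by rw [hfac]
      _ = (Nat.factorial m : ℝ) := ih hv.le

theorem hz_rewrite_and_nonneg {K : Type*} [Fintype K]
    (n : ℕ) (hn : 2 ≤ n) (f : K → ℕ) (hf : ∑ k, f k = n) (hfpos : ∀ k, 1 ≤ f k) :
    (∑ v ∈ Finset.Icc 1 (n - 1), (1 / (v : ℝ)) *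
        ((n : ℝ) ^ (1 + v) * (Nat.factorial (n - (1 + v)) : ℝ) / (Nat.factorial n : ℝ)) *
        ∑ k, ((f k : ℝ) / n) * ∏ j ∈ Finset.range v, (1 - (f k : ℝ) / n - (j : ℝ) / n))
      = ∑ k, ((f k : ℝ) / n) * ∑ v ∈ Finset.Icc 1 (n - f k), (1 / (v : ℝ)) *
          ∏ j ∈ Finset.range v, (((n : ℝ) - f k - j) / ((n : ℝ) - 1 - j)) ∧
    (∀ k, ∀ v ∈ Finset.Icc 1 (n - f k),
        (∏ j ∈ Finset.range v, (((n : ℝ) - f k - j) / ((n : ℝ) - 1 - j)))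
          ∈ Set.Icc (0 : ℝ) 1) ∧
    0 ≤ ∑ v ∈ Finset.Icc 1 (n - 1), (1 / (v : ℝ)) *
        ((n : ℝ) ^ (1 + v) * (Nat.factorial (n - (1 + v)) : ℝ) / (Nat.factorial n : ℝ)) *
        ∑ k, ((f k : ℝ) / n) * ∏ j ∈ Finset.range v, (1 - (f k : ℝ) / n - (j : ℝ) / n) := by
  have hn0 : (0 : ℝ) < n := by positivity
  have hnne : (n : ℝ) ≠ 0 := ne_of_gt hn0
  have hfle : ∀ k, f k ≤ n := by
    intro k
    calc f k ≤ ∑ k, f k := Finset.single_le_sum (fun _ _ => Nat.zero_le _) (Finset.mem_univ k)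
      _ = n := hf
  -- membership part
  have hMem : ∀ k, ∀ v ∈ Finset.Icc 1 (n - f k),
      (∏ j ∈ Finset.range v, (((n : ℝ) - f k - j) / ((n : ℝ) - 1 - j)))
        ∈ Set.Icc (0 : ℝ) 1 := by
    intro k v hv
    rw [Finset.mem_Icc] at hv
    have hfact : ∀ j ∈ Finset.range v, (0:ℝ) < (n : ℝ) - f k - j ∧
        (n : ℝ) - f k - j ≤ (n : ℝ) - 1 - j := by
      intro j hj
      rw [Finset.mem_range] at hj
      have h1 : j + 1 + f k ≤ n := by omega
      have h2 : (1:ℕ) ≤ f k := hfpos k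
      constructor
      · have : ((j : ℝ) + 1 + f k) ≤ (n : ℝ) := by exact_mod_cast h1
        linarith
      · have : (1:ℝ) ≤ (f k : ℝ) := by exact_mod_cast h2
        linarith
    constructor
    · apply Finset.prod_nonneg
      intro j hj
      obtain ⟨h1, h2⟩ := hfact j hj
      have hden : (0:ℝ) < (n : ℝ) - 1 - j := lt_of_lt_of_le h1 h2
      positivity
    · apply Finset.prod_le_one
      · intro j hj
        obtain ⟨h1, h2⟩ := hfact j hj
        have hden : (0:ℝ) < (n : ℝ) - 1 - j := lt_of_lt_of_le h1 h2
        positivity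
      · intro j hj
        obtain ⟨h1, h2⟩ := hfact j hj
        have hden : (0:ℝ) < (n : ℝ) - 1 - j := lt_of_lt_of_le h1 h2
        rw [div_le_one hden]
        exact h2
  -- rewrite part
  have hEq : (∑ v ∈ Finset.Icc 1 (n - 1), (1 / (v : ℝ)) *
        ((n : ℝ) ^ (1 + v) * (Nat.factorial (n - (1 + v)) : ℝ) / (Nat.factorial n : ℝ)) *
        ∑ k, ((f k : ℝ) / n) * ∏ j ∈ Finset.range v, (1 - (f k : ℝ) / n - (j : ℝ) / n))
      = ∑ k, ((f k : ℝ) / n) * ∑ v ∈ Finset.Icc 1 (n - f k), (1 / (v : ℝ)) *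
          ∏ j ∈ Finset.range v, (((n : ℝ) - f k - j) / ((n : ℝ) - 1 - j)) := by
    have step1 : ∀ v ∈ Finset.Icc 1 (n-1), (1 / (v : ℝ)) *
        ((n : ℝ) ^ (1 + v) * (Nat.factorial (n - (1 + v)) : ℝ) / (Nat.factorial n : ℝ)) *
        ∑ k, ((f k : ℝ) / n) * ∏ j ∈ Finset.range v, (1 - (f k : ℝ) / n - (j : ℝ) / n)
        = ∑ k, (1 / (v : ℝ)) *
        ((n : ℝ) ^ (1 + v) * (Nat.factorial (n - (1 + v)) : ℝ) / (Nat.factorial n : ℝ)) *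
        (((f k : ℝ) / n) * ∏ j ∈ Finset.range v, (1 - (f k : ℝ) / n - (j : ℝ) / n)) := by
      intro v _
      rw [Finset.mul_sum]
    rw [Finset.sum_congr rfl step1, Finset.sum_comm]
    apply Finset.sum_congr rfl
    intro k _
    -- per k
    have hsub : Finset.Icc 1 (n - f k) ⊆ Finset.Icc 1 (n - 1) := by
      apply Finset.Icc_subset_Icc_right
      have := hfpos k
      omega
    have hvanish : ∀ v ∈ Finset.Icc 1 (n - 1), v ∉ Finset.Icc 1 (n - f k) →
        (1 / (v : ℝ)) *
        ((n : ℝ) ^ (1 + v) * (Nat.factorial (n - (1 + v)) : ℝ) / (Nat.factorial n : ℝ)) *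
        (((f k : ℝ) / n) * ∏ j ∈ Finset.range v, (1 - (f k : ℝ) / n - (j : ℝ) / n)) = 0 := by
      intro v hv hnv
      rw [Finset.mem_Icc] at hv hnv
      have hgt : n - f k < v := by omega
      have hjin : (n - f k) ∈ Finset.range v := Finset.mem_range.mpr hgt
      have hzero : (1 - (f k : ℝ) / n - ((n - f k : ℕ) : ℝ) / n) = 0 := by
        rw [Nat.cast_sub (hfle k)]
        field_simp
        ring
      rw [Finset.prod_eq_zero hjin hzero]
      ring
    rw [← Finset.sum_subset hsub hvanish, Finset.mul_sum]
    apply Finset.sum_congr rfl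
    intro v hv
    · rw [Finset.mem_Icc] at hv
      obtain ⟨hv1, hv2⟩ := hv
      have hvn : v ≤ n - 1 := by have := hfpos k; omega
      -- core identity
      have hP : ∀ j ∈ Finset.range v, (0:ℝ) < (n : ℝ) - 1 - j := by
        intro j hj
        rw [Finset.mem_range] at hj
        have : j + 2 ≤ n := by omega
        have : ((j:ℝ) + 2) ≤ (n : ℝ) := by exact_mod_cast this
        linarith
      have hPpos : (0:ℝ) < ∏ j ∈ Finset.range v, ((n : ℝ) - 1 - j) :=
        Finset.prod_pos hP
      have hPne := ne_of_gt hPpos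
      have hfac : (Nat.factorial (n - (1 + v)) : ℝ) * ∏ j ∈ Finset.range v, ((n : ℝ) - 1 - j)
          = (Nat.factorial (n - 1) : ℝ) := by
        have h1 : n - (1 + v) = (n - 1) - v := by omega
        have h2 : ∀ j ∈ Finset.range v, ((n:ℝ) - 1 - j) = (((n-1 : ℕ) : ℝ) - j) := by
          intro j _
          rw [Nat.cast_sub (by omega : 1 ≤ n)]
          push_cast; ring
        rw [h1, Finset.prod_congr rfl h2]
        exact desc_prod (n-1) v hvn
      have hnfac : (Nat.factorial n : ℝ) = n * (Nat.factorial (n - 1) : ℝ) := by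
        have h1 : n = (n - 1) + 1 := by omega
        conv_lhs => rw [h1]
        rw [Nat.factorial_succ]
        push_cast [Nat.cast_sub (by omega : 1 ≤ n)]
        ring
      have hprod1 : (∏ j ∈ Finset.range v, (1 - (f k : ℝ) / n - (j : ℝ) / n))
          = (∏ j ∈ Finset.range v, ((n:ℝ) - f k - j)) / (n:ℝ)^v := by
        rw [show ((n:ℝ)^v) = ∏ _j ∈ Finset.range v, (n:ℝ) from by
          rw [Finset.prod_const, Finset.card_range], ← Finset.prod_div_distrib]
        apply Finset.prod_congr rfl
        intro j _
        field_simp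
      have hrhsprod : (∏ j ∈ Finset.range v, (((n : ℝ) - f k - j) / ((n : ℝ) - 1 - j)))
          = (∏ j ∈ Finset.range v, ((n:ℝ) - f k - j)) / ∏ j ∈ Finset.range v, ((n : ℝ) - 1 - j) := by
        rw [Finset.prod_div_distrib]
      have hfacne : (Nat.factorial n : ℝ) ≠ 0 := by positivity
      have hpow : ((n:ℝ))^v ≠ 0 := by positivity
      set D : ℝ := (Nat.factorial (n - (1 + v)) : ℝ) with hD
      set Q : ℝ := ∏ j ∈ Finset.range v, ((n:ℝ) - f k - j) with hQ
      set P : ℝ := ∏ j ∈ Finset.range v, ((n : ℝ) - 1 - j) with hPdef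
      have hkey : (n:ℝ) ^ (1 + v) * D / (Nat.factorial n : ℝ) * (Q / (n:ℝ)^v) = Q / P := by
        field_simp
        linear_combination ((n:ℝ) * (n:ℝ)^v * Q) * hfac - (Q * (n:ℝ)^v) * hnfac
      calc (1 / (v : ℝ)) * ((n:ℝ) ^ (1 + v) * D / (Nat.factorial n : ℝ)) *
            (((f k : ℝ) / n) * ∏ j ∈ Finset.range v, (1 - (f k : ℝ) / n - (j : ℝ) / n))
          = ((f k : ℝ) / n) * ((1 / (v : ℝ)) *
            ((n:ℝ) ^ (1 + v) * D / (Nat.factorial n : ℝ) * (Q / (n:ℝ)^v))) := by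
            rw [hprod1]; ring
        _ = ((f k : ℝ) / n) * ((1 / (v : ℝ)) * (Q / P)) := by rw [hkey]
        _ = ((f k : ℝ) / n) * ((1 / (v : ℝ)) *
            ∏ j ∈ Finset.range v, (((n : ℝ) - f k - j) / ((n : ℝ) - 1 - j))) := by
            rw [hrhsprod]
  refine ⟨hEq, hMem, ?_⟩
  rw [hEq]
  apply Finset.sum_nonneg
  intro k _
  apply mul_nonneg (by positivity)
  apply Finset.sum_nonneg
  intro v hv
  have := (hMem k v hv).1
  positivity
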